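/- arXiv:1312.3381 — 3 statements merged into one kernel-verified Lean document; each statement's English description precedes it below -/
import Mathlib

section
/- For a ≥ 0 and b > 1, the function V(a,b,x) = Γ(a)⁻¹ ∫₀^∞ e^{−tx} t^{a−1} (1+t)^{b−a−1} dt solves Kummer's equation x w'' + (b−x) w' − a w = 0 on (0,∞), provided a > 0. -/
open Real MeasureTheory Set Filter


/-- exponent bound for `t ≤ 1` -/
lemma kv_aux_le_one {q t : ℝ} (ht : 0 < t) (ht1 : t ≤ 1) : (1 + t) ^ q ≤ 2 ^ |q| := by
  rcases le_or_gt 0 q with hq | hq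
  · calc (1 + t) ^ q ≤ 2 ^ q := Real.rpow_le_rpow (by linarith) (by linarith) hq
      _ ≤ 2 ^ |q| := Real.rpow_le_rpow_of_exponent_le one_le_two (le_abs_self q)
  · calc (1 + t) ^ q ≤ 1 := Real.rpow_le_one_of_one_le_of_nonpos (by linarith) hq.le
      _ ≤ 2 ^ |q| := Real.one_le_rpow one_le_two (abs_nonneg q)

/-- exponent bound for `1 ≤ t` -/
lemma kv_aux_ge_one {q t : ℝ} (ht : 1 ≤ t) : (1 + t) ^ q ≤ 2 ^ |q| * t ^ |q| := by
  have h2t : (2 * t) ^ |q| = 2 ^ |q| * t ^ |q| :=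
    Real.mul_rpow (by norm_num) (by linarith)
  rw [← h2t]
  rcases le_or_gt 0 q with hq | hq
  · calc (1 + t) ^ q ≤ (2 * t) ^ q := Real.rpow_le_rpow (by linarith) (by linarith) hq
      _ ≤ (2 * t) ^ |q| := Real.rpow_le_rpow_of_exponent_le (by linarith) (le_abs_self q)
  · calc (1 + t) ^ q ≤ 1 := Real.rpow_le_one_of_one_le_of_nonpos (by linarith) hq.le
      _ ≤ (2 * t) ^ |q| := Real.one_le_rpow (by linarith) (abs_nonneg q)

lemma kv_intA {c s : ℝ} (hc : 0 < c) (hs : 0 < s) :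
    IntegrableOn (fun t : ℝ => Real.exp (-t * c) * t ^ (s - 1)) (Set.Ioi 0) := by
  have h := Real.GammaIntegral_convergent hs
  have h2 := (integrableOn_Ioi_comp_mul_left_iff
      (fun x : ℝ => Real.exp (-x) * x ^ (s - 1)) 0 hc).2 (by simpa using h)
  have h3 : IntegrableOn
      (fun x : ℝ => (c ^ (s - 1))⁻¹ * (Real.exp (-(c * x)) * (c * x) ^ (s - 1)))
      (Set.Ioi 0) := h2.const_mul _
  refine IntegrableOn.congr_fun h3 (fun t ht => ?_) measurableSet_Ioi
  have ht' : (0:ℝ) < t := ht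
  have hm : (c * t) ^ (s - 1) = c ^ (s - 1) * t ^ (s - 1) := Real.mul_rpow hc.le ht'.le
  have hcne : c ^ (s - 1) ≠ 0 := (Real.rpow_pos_of_pos hc _).ne'
  rw [hm, show -(c * t) = -t * c by ring]
  field_simp

lemma kv_contOn {c s q : ℝ} :
    ContinuousOn (fun t : ℝ => Real.exp (-t * c) * t ^ (s - 1) * (1 + t) ^ q) (Set.Ioi 0) := by
  apply ContinuousOn.mul
  · apply ContinuousOn.mul
    · exact (Real.continuous_exp.comp (continuous_id.neg.mul continuous_const)).continuousOn
    · exact ContinuousOn.rpow_const continuousOn_id (fun t ht => Or.inl (ne_of_gt ht))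
  · exact ContinuousOn.rpow_const (continuousOn_const.add continuousOn_id)
      (fun t ht => Or.inl (by have : (0:ℝ) < t := ht; positivity))

lemma kv_intB {c s : ℝ} (q : ℝ) (hc : 0 < c) (hs : 0 < s) :
    IntegrableOn (fun t : ℝ => Real.exp (-t * c) * t ^ (s - 1) * (1 + t) ^ q) (Set.Ioi 0) := by
  have hs' : 0 < s + |q| := by have := abs_nonneg q; linarith
  have hbound : IntegrableOn (fun t : ℝ => (2:ℝ) ^ |q| *
      (Real.exp (-t * c) * t ^ (s - 1) + Real.exp (-t * c) * t ^ (s + |q| - 1)))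
      (Set.Ioi 0) := ((kv_intA hc hs).add (kv_intA hc hs')).const_mul _
  refine Integrable.mono hbound (kv_contOn.aestronglyMeasurable measurableSet_Ioi) ?_
  rw [ae_restrict_iff' measurableSet_Ioi]
  filter_upwards with t ht
  have ht' : (0:ℝ) < t := ht
  have he : (0:ℝ) < Real.exp (-t * c) := Real.exp_pos _
  have h1 : (0:ℝ) ≤ t ^ (s - 1) := Real.rpow_nonneg ht'.le _
  have h2 : (0:ℝ) ≤ t ^ (s + |q| - 1) := Real.rpow_nonneg ht'.le _
  have h3 : (0:ℝ) ≤ (1 + t) ^ q := Real.rpow_nonneg (by linarith) _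
  have h4 : (0:ℝ) ≤ (2:ℝ) ^ |q| := Real.rpow_nonneg (by norm_num) _
  rw [Real.norm_eq_abs, Real.norm_eq_abs, abs_of_nonneg (by positivity),
    abs_of_nonneg (by positivity)]
  rcases le_total t 1 with h1t | h1t
  · have hb := kv_aux_le_one ht' h1t (q := q)
    have k1 : Real.exp (-t * c) * t ^ (s - 1) * (1 + t) ^ q
        ≤ Real.exp (-t * c) * t ^ (s - 1) * (2 ^ |q|) := by
      apply mul_le_mul_of_nonneg_left hb (by positivity)
    nlinarith [mul_nonneg h4 (mul_nonneg he.le h2)]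
  · have hle := kv_aux_ge_one h1t (q := q)
    have hpow : t ^ (s - 1) * t ^ |q| = t ^ (s + |q| - 1) := by
      rw [← Real.rpow_add ht']; ring_nf
    have k1 : Real.exp (-t * c) * t ^ (s - 1) * (1 + t) ^ q
        ≤ Real.exp (-t * c) * t ^ (s - 1) * (2 ^ |q| * t ^ |q|) := by
      apply mul_le_mul_of_nonneg_left hle (by positivity)
    have k2 : Real.exp (-t * c) * t ^ (s - 1) * (2 ^ |q| * t ^ |q|)
        = 2 ^ |q| * (Real.exp (-t * c) * t ^ (s + |q| - 1)) := by
      rw [← hpow]; ring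
    rw [k2] at k1
    nlinarith [mul_nonneg h4 (mul_nonneg he.le h1)]

lemma kv_deriv {p q x : ℝ} (hp : 0 < p) (hx : 0 < x) :
    HasDerivAt (fun y => ∫ t in Set.Ioi (0:ℝ), Real.exp (-t * y) * t ^ (p - 1) * (1 + t) ^ q)
      (-∫ t in Set.Ioi (0:ℝ), Real.exp (-t * x) * t ^ (p + 1 - 1) * (1 + t) ^ q) x := by
  have hx2 : 0 < x / 2 := by linarith
  have key := hasDerivAt_integral_of_dominated_loc_of_deriv_le (μ := volume.restrict (Set.Ioi 0))
    (F := fun y t => Real.exp (-t * y) * t ^ (p - 1) * (1 + t) ^ q)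
    (F' := fun y t => -(Real.exp (-t * y) * t ^ (p + 1 - 1) * (1 + t) ^ q))
    (x₀ := x) (s := Metric.ball x (x / 2))
    (bound := fun t => Real.exp (-t * (x / 2)) * t ^ (p + 1 - 1) * (1 + t) ^ q)
    (Metric.ball_mem_nhds x hx2)
    (Filter.Eventually.of_forall fun y =>
      kv_contOn.aestronglyMeasurable measurableSet_Ioi)
    (kv_intB q hx hp)
    ((kv_contOn.neg).aestronglyMeasurable measurableSet_Ioi)
    ?_ (kv_intB q hx2 (by linarith)) ?_
  · have := key.2
    rwa [MeasureTheory.integral_neg] at this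
  · rw [ae_restrict_iff' measurableSet_Ioi]
    filter_upwards with t ht
    intro y hy
    have ht' : (0:ℝ) < t := ht
    have hy' : x / 2 ≤ y := by
      rw [Metric.mem_ball, Real.dist_eq, abs_lt] at hy
      linarith
    have h1 : (0:ℝ) ≤ t ^ (p + 1 - 1) := Real.rpow_nonneg ht'.le _
    have h2 : (0:ℝ) ≤ (1 + t) ^ q := Real.rpow_nonneg (by linarith) _
    rw [norm_neg, Real.norm_eq_abs, abs_of_nonneg (by positivity)]
    have hexp : Real.exp (-t * y) ≤ Real.exp (-t * (x / 2)) :=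
      Real.exp_le_exp.2 (by nlinarith)
    exact mul_le_mul_of_nonneg_right
      (mul_le_mul_of_nonneg_right hexp h1) h2
  · rw [ae_restrict_iff' measurableSet_Ioi]
    filter_upwards with t ht
    intro y hy
    have ht' : (0:ℝ) < t := ht
    have hlin : HasDerivAt (fun y : ℝ => -t * y) (-t) y := by
      simpa using (hasDerivAt_id y).const_mul (-t)
    have he := hlin.exp
    have hprod := (he.mul_const (t ^ (p - 1))).mul_const ((1 + t) ^ q)
    refine hprod.congr_deriv ?_
    have hpe : t ^ (p + 1 - 1) = t ^ (p - 1) * t := by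
      rw [show p + 1 - 1 = (p - 1) + 1 by ring, Real.rpow_add_one ht'.ne']
    rw [hpe]; ring

lemma kv_key {a b x : ℝ} (ha : 0 < a) (hx : 0 < x) :
    x * (∫ t in Set.Ioi (0:ℝ), Real.exp (-t * x) * t ^ (a + 2 - 1) * (1 + t) ^ (b - a - 1))
      + (x - b) * (∫ t in Set.Ioi (0:ℝ), Real.exp (-t * x) * t ^ (a + 1 - 1) * (1 + t) ^ (b - a - 1))
      - a * (∫ t in Set.Ioi (0:ℝ), Real.exp (-t * x) * t ^ (a - 1) * (1 + t) ^ (b - a - 1)) = 0 := by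
  set g : ℝ → ℝ := fun t => Real.exp (-t * x) * t ^ a * (1 + t) ^ (b - a) with hg
  set g' : ℝ → ℝ := fun t =>
    Real.exp (-t * x) * t ^ (a - 1) * (1 + t) ^ (b - a - 1) * (a + b * t - x * t - x * t ^ 2)
    with hg'
  -- pointwise rewriting identities
  have hpe1 : ∀ t : ℝ, 0 < t → t ^ (a + 1 - 1) = t ^ (a - 1) * t := fun t ht => by
    rw [show a + 1 - 1 = (a - 1) + 1 by ring, Real.rpow_add_one ht.ne']
  have hpe2 : ∀ t : ℝ, 0 < t → t ^ (a + 2 - 1) = t ^ (a - 1) * t * t := fun t ht => by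
    rw [show a + 2 - 1 = (a - 1) + 1 + 1 by ring, Real.rpow_add_one ht.ne',
      Real.rpow_add_one ht.ne']
  -- derivative of g
  have hderiv : ∀ t ∈ Set.Ioi (0:ℝ), HasDerivAt g (g' t) t := by
    intro t ht
    have ht' : (0:ℝ) < t := ht
    have h1t : (0:ℝ) < 1 + t := by linarith
    have hlin : HasDerivAt (fun t : ℝ => -t * x) (-x) t := by
      simpa using ((hasDerivAt_id t).neg.mul_const x)
    have he := hlin.exp
    have hp : HasDerivAt (fun t : ℝ => t ^ a) (a * t ^ (a - 1)) t :=
      Real.hasDerivAt_rpow_const (Or.inl ht'.ne')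
    have hu : HasDerivAt (fun t : ℝ => (1 + t) ^ (b - a)) ((b - a) * (1 + t) ^ (b - a - 1)) t := by
      have h0 : HasDerivAt (fun t : ℝ => 1 + t) 1 t := by
        simpa using (hasDerivAt_id t).const_add (1:ℝ)
      have h := (Real.hasDerivAt_rpow_const (x := 1 + t) (p := b - a)
        (Or.inl h1t.ne')).comp t h0
      rw [mul_one] at h; exact h
    have hprod := (he.mul hp).mul hu
    refine hprod.congr_deriv ?_
    have hta : t ^ a = t ^ (a - 1) * t := by
      rw [← Real.rpow_add_one ht'.ne' (a - 1)]; congr 1; ring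
    have hub : (1 + t) ^ (b - a) = (1 + t) ^ (b - a - 1) * (1 + t) := by
      rw [← Real.rpow_add_one h1t.ne' (b - a - 1)]; congr 1; ring
    simp only [Pi.mul_apply]
    rw [hg', hta, hub]; ring
  -- continuity at 0
  have hcont : ContinuousWithinAt g (Set.Ici 0) 0 := by
    have c1 : ContinuousAt (fun t : ℝ => Real.exp (-t * x)) 0 :=
      (Real.continuous_exp.comp (by continuity)).continuousAt
    have c2 : ContinuousAt (fun t : ℝ => t ^ a) 0 :=
      Real.continuousAt_rpow_const 0 a (Or.inr ha.le)
    have c3 : ContinuousAt (fun t : ℝ => (1 + t) ^ (b - a)) 0 :=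
      ContinuousAt.rpow_const ((continuous_const.add continuous_id).continuousAt) (Or.inl (by norm_num))
    exact ((c1.mul c2).mul c3).continuousWithinAt
  -- tendsto at infinity
  have htend : Tendsto g atTop (nhds 0) := by
    have h0 := tendsto_rpow_mul_exp_neg_mul_atTop_nhds_zero (a + |b - a|) x hx
    have h1 := h0.const_mul ((2:ℝ) ^ |b - a|)
    rw [mul_zero] at h1
    refine tendsto_of_tendsto_of_tendsto_of_le_of_le' tendsto_const_nhds h1 ?_ ?_
    · filter_upwards [Filter.eventually_ge_atTop (1:ℝ)] with t ht
      have : (0:ℝ) < t := by linarith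
      have : (0:ℝ) < 1 + t := by linarith
      positivity
    · filter_upwards [Filter.eventually_ge_atTop (1:ℝ)] with t ht
      have ht' : (0:ℝ) < t := by linarith
      have hle := kv_aux_ge_one (q := b - a) ht
      have k1 : g t ≤ Real.exp (-t * x) * t ^ a * (2 ^ |b - a| * t ^ |b - a|) :=
        mul_le_mul_of_nonneg_left hle (by positivity)
      have k2 : Real.exp (-t * x) * t ^ a * (2 ^ |b - a| * t ^ |b - a|)
          = 2 ^ |b - a| * (t ^ (a + |b - a|) * Real.exp (-x * t)) := by
        rw [Real.rpow_add ht', show -x * t = -t * x by ring]; ring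
      rw [k2] at k1; exact k1
  -- integrability of g'
  have h0i := kv_intB (b - a - 1) hx ha
  have h1i := kv_intB (c := x) (s := a + 1) (b - a - 1) hx (by linarith)
  have h2i := kv_intB (c := x) (s := a + 2) (b - a - 1) hx (by linarith)
  have hgi : IntegrableOn g' (Set.Ioi 0) := by
    have combo : IntegrableOn (fun t : ℝ =>
        a * (Real.exp (-t * x) * t ^ (a - 1) * (1 + t) ^ (b - a - 1))
        + (b - x) * (Real.exp (-t * x) * t ^ (a + 1 - 1) * (1 + t) ^ (b - a - 1))
        - x * (Real.exp (-t * x) * t ^ (a + 2 - 1) * (1 + t) ^ (b - a - 1)))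
        (Set.Ioi 0) := ((h0i.const_mul a).add (h1i.const_mul (b - x))).sub (h2i.const_mul x)
    refine IntegrableOn.congr_fun combo (fun t ht => ?_) measurableSet_Ioi
    have ht' : (0:ℝ) < t := ht
    rw [hpe1 t ht', hpe2 t ht', hg']; ring
  -- FTC
  have hftc := integral_Ioi_of_hasDerivAt_of_tendsto hcont hderiv hgi htend
  have hg0 : g 0 = 0 := by simp [hg, Real.zero_rpow ha.ne']
  rw [hg0, zero_sub, neg_zero] at hftc
  -- combine integrals
  have hzero : (∫ t in Set.Ioi (0:ℝ),
      (x * (Real.exp (-t * x) * t ^ (a + 2 - 1) * (1 + t) ^ (b - a - 1))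
        + (x - b) * (Real.exp (-t * x) * t ^ (a + 1 - 1) * (1 + t) ^ (b - a - 1))
        - a * (Real.exp (-t * x) * t ^ (a - 1) * (1 + t) ^ (b - a - 1)))) = 0 := by
    have hcongr : (∫ t in Set.Ioi (0:ℝ),
        (x * (Real.exp (-t * x) * t ^ (a + 2 - 1) * (1 + t) ^ (b - a - 1))
          + (x - b) * (Real.exp (-t * x) * t ^ (a + 1 - 1) * (1 + t) ^ (b - a - 1))
          - a * (Real.exp (-t * x) * t ^ (a - 1) * (1 + t) ^ (b - a - 1))))
        = ∫ t in Set.Ioi (0:ℝ), -(g' t) := by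
      apply MeasureTheory.setIntegral_congr_fun measurableSet_Ioi
      intro t ht
      have ht' : (0:ℝ) < t := ht
      simp only [hg']
      rw [hpe1 t ht', hpe2 t ht']; ring
    rw [hcongr, MeasureTheory.integral_neg, hftc, neg_zero]
  have hadd : IntegrableOn (fun t : ℝ =>
      x * (Real.exp (-t * x) * t ^ (a + 2 - 1) * (1 + t) ^ (b - a - 1))
      + (x - b) * (Real.exp (-t * x) * t ^ (a + 1 - 1) * (1 + t) ^ (b - a - 1)))
      (Set.Ioi 0) := (h2i.const_mul x).add (h1i.const_mul (x - b))
  rw [MeasureTheory.integral_sub hadd (h0i.const_mul a),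
    MeasureTheory.integral_add (h2i.const_mul x) (h1i.const_mul (x - b)),
    MeasureTheory.integral_const_mul, MeasureTheory.integral_const_mul,
    MeasureTheory.integral_const_mul] at hzero
  linarith [hzero]

/-- The confluent hypergeometric function of the second kind,
`V(a,b,x) = Γ(a)⁻¹ ∫₀^∞ e^{−tx} t^{a−1} (1+t)^{b−a−1} dt`. -/
noncomputable def kummerV (a b x : ℝ) : ℝ :=
  (Real.Gamma a)⁻¹ *
    ∫ t in Set.Ioi (0 : ℝ), Real.exp (-t * x) * t ^ (a - 1) * (1 + t) ^ (b - a - 1)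

theorem kummerV_solves_kummer (a b : ℝ) (ha : 0 ≤ a) (hb : 1 < b) (ha' : 0 < a) :
    ∀ x > (0 : ℝ),
      x * deriv (deriv (kummerV a b)) x + (b - x) * deriv (kummerV a b) x
        - a * kummerV a b x = 0 := by
  intro x hx
  have hV : kummerV a b = fun y =>
      (Real.Gamma a)⁻¹ *
        ∫ t in Set.Ioi (0 : ℝ), Real.exp (-t * y) * t ^ (a - 1) * (1 + t) ^ (b - a - 1) := by
    funext y; rfl
  have hd1 : ∀ y ∈ Set.Ioi (0:ℝ), HasDerivAt (kummerV a b)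
      ((Real.Gamma a)⁻¹ *
        -∫ t in Set.Ioi (0:ℝ), Real.exp (-t * y) * t ^ (a + 1 - 1) * (1 + t) ^ (b - a - 1)) y := by
    intro y hy
    rw [hV]
    exact (kv_deriv ha' hy).const_mul _
  have hev : deriv (kummerV a b) =ᶠ[nhds x] (fun y => (Real.Gamma a)⁻¹ *
      -∫ t in Set.Ioi (0:ℝ), Real.exp (-t * y) * t ^ (a + 1 - 1) * (1 + t) ^ (b - a - 1)) :=
    Filter.eventuallyEq_of_mem (Ioi_mem_nhds hx) (fun y hy => (hd1 y hy).deriv)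
  have hd2 : HasDerivAt (fun y => (Real.Gamma a)⁻¹ *
      -∫ t in Set.Ioi (0:ℝ), Real.exp (-t * y) * t ^ (a + 1 - 1) * (1 + t) ^ (b - a - 1))
      ((Real.Gamma a)⁻¹ *
        ∫ t in Set.Ioi (0:ℝ), Real.exp (-t * x) * t ^ (a + 2 - 1) * (1 + t) ^ (b - a - 1)) x := by
    have hfun : (fun y => (Real.Gamma a)⁻¹ *
        -∫ t in Set.Ioi (0:ℝ), Real.exp (-t * y) * t ^ (a + 1 - 1) * (1 + t) ^ (b - a - 1))
        = (fun y => (-(Real.Gamma a)⁻¹) *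
          ∫ t in Set.Ioi (0:ℝ), Real.exp (-t * y) * t ^ (a + 1 - 1) * (1 + t) ^ (b - a - 1)) := by
      funext y; ring
    rw [hfun]
    have h := (kv_deriv (p := a + 1) (q := b - a - 1) (by linarith) hx).const_mul
      (-(Real.Gamma a)⁻¹)
    rw [show a + 1 + 1 - 1 = a + 2 - 1 by ring] at h
    refine h.congr_deriv ?_
    ring
  have e2 : deriv (deriv (kummerV a b)) x = (Real.Gamma a)⁻¹ *
      ∫ t in Set.Ioi (0:ℝ), Real.exp (-t * x) * t ^ (a + 2 - 1) * (1 + t) ^ (b - a - 1) := by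
    rw [Filter.EventuallyEq.deriv_eq hev]
    exact hd2.deriv
  have e1 : deriv (kummerV a b) x = (Real.Gamma a)⁻¹ *
      -∫ t in Set.Ioi (0:ℝ), Real.exp (-t * x) * t ^ (a + 1 - 1) * (1 + t) ^ (b - a - 1) :=
    (hd1 x hx).deriv
  rw [e2, e1, kummerV]
  linear_combination (Real.Gamma a)⁻¹ * kv_key ha' hx
end

section
/- Let a > 0, 1 < b < 2. Then lim_{x→0⁺} x^{b−1} V(a,b,x) = Γ(b−1)/Γ(a), where V(a,b,x) = Γ(a)⁻¹ ∫₀^∞ e^{−tx} t^{a−1}(1+t)^{b−a−1} dt. -/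
open Real Filter

open MeasureTheory Set in
/-- Change of variables `t = s/x` in the Kummer V integral. -/
lemma kummerV_key (a b : ℝ) {x : ℝ} (hx : 0 < x) :
    (∫ t in Set.Ioi (0 : ℝ), Real.exp (-t * x) * t ^ (a - 1) * (1 + t) ^ (b - a - 1))
      = x ^ (1 - b) * ∫ s in Set.Ioi (0 : ℝ),
        Real.exp (-s) * s ^ (a - 1) * (x + s) ^ (b - a - 1) := by
  have h := integral_comp_mul_right_Ioi
    (fun s => Real.exp (-s) * (s / x) ^ (a - 1) * ((x + s) / x) ^ (b - a - 1)) 0 hx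
  rw [zero_mul] at h
  have h1 : (∫ t in Set.Ioi (0 : ℝ), Real.exp (-t * x) * t ^ (a - 1) * (1 + t) ^ (b - a - 1))
      = ∫ t in Set.Ioi (0 : ℝ),
        Real.exp (-(t * x)) * (t * x / x) ^ (a - 1) * ((x + t * x) / x) ^ (b - a - 1) := by
    refine setIntegral_congr_fun measurableSet_Ioi fun t ht => ?_
    rw [mul_div_cancel_right₀ _ hx.ne', neg_mul]
    congr 2
    field_simp
  rw [h1, h, smul_eq_mul]
  rw [show (∫ s in Set.Ioi (0:ℝ),
      Real.exp (-s) * (s / x) ^ (a - 1) * ((x + s) / x) ^ (b - a - 1))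
      = ∫ s in Set.Ioi (0:ℝ), (x ^ (-(a-1)) * x ^ (-(b-a-1))) *
        (Real.exp (-s) * s ^ (a - 1) * (x + s) ^ (b - a - 1)) from
    setIntegral_congr_fun measurableSet_Ioi fun s hs => ?_, integral_const_mul]
  · rw [← mul_assoc, ← Real.rpow_neg_one x, ← Real.rpow_add hx, ← Real.rpow_add hx]
    congr 2
    ring
  · have hs0 : (0:ℝ) < s := hs
    rw [Real.div_rpow hs0.le hx.le, Real.div_rpow (by positivity) hx.le,
      Real.rpow_neg hx.le, Real.rpow_neg hx.le]
    field_simp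

open MeasureTheory Set in
lemma kummerV_limit_part (a b : ℝ) (ha : 0 < a) (hb1 : 1 < b) (hb2 : b < 2) :
    Tendsto (fun x : ℝ => ∫ s in Set.Ioi (0 : ℝ),
        Real.exp (-s) * s ^ (a - 1) * (x + s) ^ (b - a - 1))
      (nhdsWithin 0 (Set.Ioi 0)) (nhds (Real.Gamma (b - 1))) := by
  have hb1' : (0:ℝ) < b - 1 := by linarith
  have hΓ : Real.Gamma (b - 1) = ∫ s in Set.Ioi (0:ℝ), Real.exp (-s) * s ^ (b - 2) := by
    rw [Real.Gamma_eq_integral hb1', show b - 1 - 1 = b - 2 by ring]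
  rw [hΓ]
  set c := b - a - 1 with hc
  have h2c : (0:ℝ) < 2 ^ c := Real.rpow_pos_of_pos (by norm_num) c
  refine tendsto_integral_filter_of_dominated_convergence
    (fun s => (2 ^ c + 1) * (Real.exp (-s) * s ^ (a - 1) + Real.exp (-s) * s ^ (b - 2)))
    ?_ ?_ ?_ ?_
  · filter_upwards with x
    exact (by fun_prop :
      Measurable fun s : ℝ => Real.exp (-s) * s ^ (a-1) * (x + s) ^ c).aestronglyMeasurable
  · filter_upwards [Ioc_mem_nhdsGT (zero_lt_one)] with x hx
    rw [MeasureTheory.ae_restrict_iff' measurableSet_Ioi]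
    filter_upwards with s hs
    have hs0 : (0:ℝ) < s := hs
    have hes : (0:ℝ) < Real.exp (-s) := Real.exp_pos _
    have hsa : (0:ℝ) < s ^ (a-1) := Real.rpow_pos_of_pos hs0 _
    have hsb : (0:ℝ) < s ^ (b-2) := Real.rpow_pos_of_pos hs0 _
    have hxs : (0:ℝ) < x + s := by linarith [hx.1]
    have hxsc : (0:ℝ) < (x + s) ^ c := Real.rpow_pos_of_pos hxs _
    rw [Real.norm_eq_abs, abs_of_nonneg (by positivity)]
    have h4 : s ^ (a-1) * s ^ c = s ^ (b - 2) := by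
      rw [← Real.rpow_add hs0, hc]; ring_nf
    rcases le_or_gt 0 c with hc0 | hc0
    · have h1 : (x + s) ^ c ≤ (1 + s) ^ c :=
        Real.rpow_le_rpow hxs.le (by linarith [hx.2]) hc0
      rcases le_or_gt s 1 with hs1 | hs1
      · have h2 : (1 + s) ^ c ≤ 2 ^ c :=
          Real.rpow_le_rpow (by linarith) (by linarith) hc0
        calc Real.exp (-s) * s ^ (a-1) * (x + s) ^ c
            ≤ Real.exp (-s) * s ^ (a-1) * (2 ^ c) :=
              mul_le_mul_of_nonneg_left (h1.trans h2) (by positivity)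
          _ ≤ (2 ^ c + 1) * (Real.exp (-s) * s ^ (a - 1) + Real.exp (-s) * s ^ (b - 2)) := by
              nlinarith [mul_pos hes hsa, mul_pos hes hsb, mul_pos h2c (mul_pos hes hsa),
                mul_pos h2c (mul_pos hes hsb)]
      · have h2 : (1 + s) ^ c ≤ (2 * s) ^ c :=
          Real.rpow_le_rpow (by linarith) (by linarith) hc0
        have h3 : (2 * s) ^ c = 2 ^ c * s ^ c :=
          Real.mul_rpow (by norm_num) hs0.le
        calc Real.exp (-s) * s ^ (a-1) * (x + s) ^ c
            ≤ Real.exp (-s) * s ^ (a-1) * (2 ^ c * s ^ c) :=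
              mul_le_mul_of_nonneg_left (h1.trans (h2.trans_eq h3)) (by positivity)
          _ = 2 ^ c * (Real.exp (-s) * s ^ (b - 2)) := by rw [← h4]; ring
          _ ≤ (2 ^ c + 1) * (Real.exp (-s) * s ^ (a - 1) + Real.exp (-s) * s ^ (b - 2)) := by
              nlinarith [mul_pos hes hsa, mul_pos hes hsb, mul_pos h2c (mul_pos hes hsa),
                mul_pos h2c (mul_pos hes hsb)]
    · have h1 : (x + s) ^ c ≤ s ^ c :=
        Real.rpow_le_rpow_of_nonpos hs0 (by linarith [hx.1]) hc0.le
      calc Real.exp (-s) * s ^ (a-1) * (x + s) ^ c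
          ≤ Real.exp (-s) * s ^ (a-1) * s ^ c :=
            mul_le_mul_of_nonneg_left h1 (by positivity)
        _ = Real.exp (-s) * s ^ (b - 2) := by rw [mul_assoc, h4]
        _ ≤ (2 ^ c + 1) * (Real.exp (-s) * s ^ (a - 1) + Real.exp (-s) * s ^ (b - 2)) := by
            nlinarith [mul_pos hes hsa, mul_pos hes hsb, mul_pos h2c (mul_pos hes hsa),
                mul_pos h2c (mul_pos hes hsb)]
  · have i1 := Real.GammaIntegral_convergent ha
    have i2 := Real.GammaIntegral_convergent hb1'
    have hbb : b - 1 - 1 = b - 2 := by ring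
    rw [hbb] at i2
    exact (i1.add i2).const_mul _
  · rw [MeasureTheory.ae_restrict_iff' measurableSet_Ioi]
    filter_upwards with s hs
    have hs0 : (0:ℝ) < s := hs
    have h4 : Real.exp (-s) * (s ^ (a-1) * s ^ c) = Real.exp (-s) * s ^ (b - 2) := by
      rw [← Real.rpow_add hs0, hc]; ring_nf
    have hcont : ContinuousAt (fun x : ℝ => Real.exp (-s) * s ^ (a-1) * (x + s) ^ c) 0 := by
      refine continuousAt_const.mul ?_
      exact ((Real.continuousAt_rpow_const _ _ (Or.inl (by positivity))).comp
        (continuous_add_right s).continuousAt)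
    have h5 := hcont.tendsto.mono_left (nhdsWithin_le_nhds (s := Set.Ioi (0:ℝ)))
    simp only [Function.comp, zero_add, mul_assoc, h4] at h5 ⊢
    exact h5

theorem kummerV_asymptotics_at_zero (a b : ℝ) (ha : 0 < a) (hb1 : 1 < b) (hb2 : b < 2) :
    Tendsto (fun x : ℝ => x ^ (b - 1) * kummerV a b x)
      (nhdsWithin 0 (Set.Ioi 0)) (nhds (Real.Gamma (b - 1) / Real.Gamma a)) := by
  have hEq : ∀ x ∈ Set.Ioi (0:ℝ), x ^ (b - 1) * kummerV a b x
      = (Real.Gamma a)⁻¹ * ∫ s in Set.Ioi (0 : ℝ),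
          Real.exp (-s) * s ^ (a - 1) * (x + s) ^ (b - a - 1) := by
    intro x hx
    have hx0 : (0:ℝ) < x := hx
    have hpow : x ^ (b-1) * x ^ (1-b) = 1 := by
      rw [← Real.rpow_add hx0, show b-1+(1-b) = 0 by ring, Real.rpow_zero]
    rw [kummerV, kummerV_key a b hx0, mul_left_comm]
    congr 1
    rw [← mul_assoc, hpow, one_mul]
  have hT : Tendsto (fun x : ℝ => (Real.Gamma a)⁻¹ * ∫ s in Set.Ioi (0 : ℝ),
        Real.exp (-s) * s ^ (a - 1) * (x + s) ^ (b - a - 1))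
      (nhdsWithin 0 (Set.Ioi 0)) (nhds ((Real.Gamma a)⁻¹ * Real.Gamma (b - 1))) :=
    (kummerV_limit_part a b ha hb1 hb2).const_mul _
  rw [show Real.Gamma (b-1) / Real.Gamma a = (Real.Gamma a)⁻¹ * Real.Gamma (b-1) by
    rw [inv_mul_eq_div]]
  refine hT.congr' ?_
  filter_upwards [self_mem_nhdsWithin] with x hx
  exact (hEq x hx).symm
end

section
/- Let γ ∈ (0,1), λ ≠ 0 and k > 0, and let φ : [0,∞) → ℝ be the solution of q φ'' + (1−γ) φ' − λ² q φ − |λ| k φ = 0 with φ(0)=1 and φ(q) → 0 as q → ∞, given explicitly by φ(q) = e^{−|λ| q} (2|λ| q)^γ (Γ((1+γ+k)/2)/Γ(γ)) V((1+γ+k)/2, 1+γ, 2|λ| q). Then as q → 0⁺, φ(q) = 1 − (Γ(1−γ)/Γ(1+γ)) · (Γ((1+γ+k)/2)/Γ((1−γ+k)/2)) · (2|λ| q)^γ + O(q). -/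
open Real Filter Asymptotics MeasureTheory Set

/-- Integrability on `Ioi 0` from power bounds near 0 and near ∞. -/
lemma integrableOn_Ioi_of_rpow_bounds {f : ℝ → ℝ} {p q c₁ c₂ : ℝ}
    (hm : Measurable f) (hp : -1 < p) (hq : q < -1)
    (h₁ : ∀ t ∈ Set.Ioc (0:ℝ) 1, |f t| ≤ c₁ * t ^ p)
    (h₂ : ∀ t ∈ Set.Ioi (1:ℝ), |f t| ≤ c₂ * t ^ q) :
    MeasureTheory.IntegrableOn f (Set.Ioi 0) := by
  have hsplit : Set.Ioi (0:ℝ) = Set.Ioc 0 1 ∪ Set.Ioi 1 :=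
    (Set.Ioc_union_Ioi_eq_Ioi zero_le_one).symm
  rw [hsplit]
  apply MeasureTheory.IntegrableOn.union
  · have hint : IntegrableOn (fun t : ℝ => c₁ * t ^ p) (Set.Ioc 0 1) :=
      ((intervalIntegrable_iff_integrableOn_Ioc_of_le zero_le_one).mp
        (intervalIntegral.intervalIntegrable_rpow' hp)).const_mul c₁
    refine hint.mono' hm.aestronglyMeasurable ?_
    filter_upwards [ae_restrict_mem measurableSet_Ioc] with t ht
    exact h₁ t ht
  · have hint : IntegrableOn (fun t : ℝ => c₂ * t ^ q) (Set.Ioi 1) :=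
      (integrableOn_Ioi_rpow_of_lt hq one_pos).const_mul c₂
    refine hint.mono' hm.aestronglyMeasurable ?_
    filter_upwards [ae_restrict_mem measurableSet_Ioi] with t ht
    exact h₂ t ht

/-- integrability of the Beta-type integrand -/
lemma beta_integrand_integrable {a g : ℝ} (ha : 0 < a) (hg1 : g < 1) :
    MeasureTheory.IntegrableOn (fun t : ℝ => t ^ (a-1) * (1+t) ^ (g-a-1)) (Set.Ioi 0) := by
  refine integrableOn_Ioi_of_rpow_bounds (c₁ := 1) (c₂ := 1) (by fun_prop)
    (show (-1:ℝ) < a-1 by linarith) (show g-2 < -1 by linarith) ?_ ?_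
  · rintro t ⟨ht0, ht1⟩
    rw [abs_of_nonneg (mul_nonneg (Real.rpow_nonneg ht0.le _) (Real.rpow_nonneg (by linarith) _)),
      one_mul]
    calc t ^ (a-1) * (1+t) ^ (g-a-1) ≤ t ^ (a-1) * 1 :=
          mul_le_mul_of_nonneg_left
            (Real.rpow_le_one_of_one_le_of_nonpos (by linarith) (by linarith))
            (Real.rpow_nonneg ht0.le _)
    _ = t ^ (a-1) := mul_one _
  · intro t ht
    have ht0 : (0:ℝ) < t := lt_trans one_pos ht
    rw [abs_of_nonneg (mul_nonneg (Real.rpow_nonneg ht0.le _) (Real.rpow_nonneg (by linarith) _)),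
      one_mul]
    calc t ^ (a-1) * (1+t) ^ (g-a-1) ≤ t ^ (a-1) * t ^ (g-a-1) :=
          mul_le_mul_of_nonneg_left
            (Real.rpow_le_rpow_of_nonpos ht0 (by linarith) (by linarith))
            (Real.rpow_nonneg ht0.le _)
    _ = t ^ (g-2) := by rw [← Real.rpow_add ht0]; ring_nf

/-- integrability of the shifted Beta-type integrand -/
lemma shifted_beta_integrable {a g u : ℝ} (ha : 0 < a) (hg1 : g < 1) (hu : 0 < u) :
    MeasureTheory.IntegrableOn (fun s : ℝ => s ^ (a-1) * (s+u) ^ (g-a-1)) (Set.Ioi 0) := by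
  refine integrableOn_Ioi_of_rpow_bounds (c₁ := u ^ (g-a-1)) (c₂ := 1) (by fun_prop)
    (show (-1:ℝ) < a-1 by linarith) (show g-2 < -1 by linarith) ?_ ?_
  · rintro t ⟨ht0, ht1⟩
    rw [abs_of_nonneg (mul_nonneg (Real.rpow_nonneg ht0.le _) (Real.rpow_nonneg (by linarith) _)),
      mul_comm (u ^ (g-a-1))]
    exact mul_le_mul_of_nonneg_left
      (Real.rpow_le_rpow_of_nonpos hu (by linarith) (by linarith))
      (Real.rpow_nonneg ht0.le _)
  · intro t ht
    have ht0 : (0:ℝ) < t := lt_trans one_pos ht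
    rw [abs_of_nonneg (mul_nonneg (Real.rpow_nonneg ht0.le _) (Real.rpow_nonneg (by linarith) _)),
      one_mul]
    calc t ^ (a-1) * (t+u) ^ (g-a-1) ≤ t ^ (a-1) * t ^ (g-a-1) :=
          mul_le_mul_of_nonneg_left
            (Real.rpow_le_rpow_of_nonpos ht0 (by linarith [hu.le]) (by linarith))
            (Real.rpow_nonneg ht0.le _)
    _ = t ^ (g-2) := by rw [← Real.rpow_add ht0]; ring_nf

/-- integrability of `s ↦ s^(c-1) exp(-(r s))` on `Ioi 0` -/
lemma rpow_exp_integrable {c r : ℝ} (hc : 0 < c) (hr : 0 < r) :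
    MeasureTheory.IntegrableOn (fun s : ℝ => s ^ (c-1) * Real.exp (-(r*s))) (Set.Ioi 0) := by
  have hf : IntegrableOn (fun y : ℝ => Real.exp (-y) * y ^ (c-1)) (Set.Ioi 0) :=
    Real.GammaIntegral_convergent hc
  have h1 : IntegrableOn (fun s : ℝ => Real.exp (-(r*s)) * (r*s) ^ (c-1)) (Set.Ioi 0) := by
    have := (integrableOn_Ioi_comp_mul_left_iff
      (fun y : ℝ => Real.exp (-y) * y ^ (c-1)) 0 hr).mpr (by simpa using hf)
    simpa using this
  have h2 : IntegrableOn (fun s : ℝ => (r ^ (c-1))⁻¹ * (Real.exp (-(r*s)) * (r*s) ^ (c-1)))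
      (Set.Ioi 0) := h1.const_mul ((r ^ (c-1))⁻¹)
  refine MeasureTheory.IntegrableOn.congr_fun h2 (fun s hs => ?_) measurableSet_Ioi
  have hs0 : (0:ℝ) < s := hs
  rw [Real.mul_rpow hr.le hs0.le]
  field_simp [(Real.rpow_pos_of_pos hr (c-1)).ne']

/-- The Beta-type integral value. -/
lemma beta_value {a g : ℝ} (ha : 0 < a) (hg1 : g < 1) :
    ∫ t in Set.Ioi (0:ℝ), t ^ (a-1) * (1+t) ^ (g-a-1)
      = Real.Gamma a * Real.Gamma (1-g) / Real.Gamma (a+1-g) := by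
  have hc : 0 < a+1-g := by linarith
  set F : ℝ → ℝ → ℝ := fun t s => t ^ (a-1) * (s ^ (a-g) * Real.exp (-((1+t)*s))) with hF
  -- inner integral in s, for t > 0
  have inner_s : ∀ t : ℝ, 0 < t → ∫ s in Set.Ioi (0:ℝ), F t s
      = Real.Gamma (a+1-g) * (t ^ (a-1) * (1+t) ^ (g-a-1)) := by
    intro t ht
    have h1t : (0:ℝ) < 1+t := by linarith
    rw [hF]
    simp only
    rw [MeasureTheory.integral_const_mul]
    have := integral_rpow_mul_exp_neg_mul_Ioi hc h1t
    rw [show a+1-g-1 = a-g by ring] at this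
    rw [this, one_div, ← Real.rpow_neg_one (1+t), ← Real.rpow_mul h1t.le,
      show (-1:ℝ) * (a+1-g) = g-a-1 from by ring]
    ring
  -- inner integral in t, for s > 0
  have inner_t : ∀ s : ℝ, 0 < s → ∫ t in Set.Ioi (0:ℝ), F t s
      = Real.Gamma a * (Real.exp (-s) * s ^ ((1-g)-1)) := by
    intro s hs
    have hrw : ∀ t : ℝ, F t s = (s ^ (a-g) * Real.exp (-s)) * (t ^ (a-1) * Real.exp (-(s*t))) := by
      intro t; rw [hF]; simp only
      rw [show -((1+t)*s) = -s + -(s*t) from by ring, Real.exp_add]; ring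
    simp_rw [hrw]
    rw [MeasureTheory.integral_const_mul, integral_rpow_mul_exp_neg_mul_Ioi ha hs,
      one_div, ← Real.rpow_neg_one s, ← Real.rpow_mul hs.le,
      show (-1:ℝ)*a = -a from by ring,
      show (1:ℝ)-g-1 = (a-g) + -a from by ring, Real.rpow_add hs]
    ring
  have hmeas : Measurable (Function.uncurry F) := by
    rw [hF]; fun_prop
  have hint : Integrable (Function.uncurry F)
      ((volume.restrict (Set.Ioi 0)).prod (volume.restrict (Set.Ioi 0))) := by
    rw [MeasureTheory.integrable_prod_iff hmeas.aestronglyMeasurable]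
    constructor
    · filter_upwards [ae_restrict_mem measurableSet_Ioi] with t ht
      have h1t : (0:ℝ) < 1+t := by linarith [mem_Ioi.mp ht]
      have := (rpow_exp_integrable (show 0 < a+1-g from hc) h1t).const_mul (t ^ (a-1))
      rw [show a+1-g-1 = a-g from by ring] at this
      exact this
    · have heq : (fun t => ∫ s in Set.Ioi (0:ℝ), ‖F t s‖) =ᵐ[volume.restrict (Set.Ioi 0)]
          (fun t => Real.Gamma (a+1-g) * (t ^ (a-1) * (1+t) ^ (g-a-1))) := by
        filter_upwards [ae_restrict_mem measurableSet_Ioi] with t ht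
        have ht0 : (0:ℝ) < t := ht
        rw [← inner_s t ht0]
        refine setIntegral_congr_fun measurableSet_Ioi (fun s hs => ?_)
        have hs0 : (0:ℝ) < s := hs
        have hnn : 0 ≤ F t s := by
          rw [hF]; simp only
          have := Real.rpow_nonneg ht0.le (a-1)
          have := Real.rpow_nonneg hs0.le (a-g)
          positivity
        rw [Real.norm_eq_abs, abs_of_nonneg hnn]
      exact Integrable.congr ((beta_integrand_integrable ha hg1).const_mul
        (Real.Gamma (a+1-g))) heq.symm
  have swap := MeasureTheory.integral_integral_swap hint
  have lhs_eq : ∫ t in Set.Ioi (0:ℝ), ∫ s in Set.Ioi (0:ℝ), F t s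
      = Real.Gamma (a+1-g) * ∫ t in Set.Ioi (0:ℝ), t ^ (a-1) * (1+t) ^ (g-a-1) := by
    rw [← MeasureTheory.integral_const_mul]
    exact setIntegral_congr_fun measurableSet_Ioi (fun t ht => inner_s t ht)
  have rhs_eq : ∫ s in Set.Ioi (0:ℝ), ∫ t in Set.Ioi (0:ℝ), F t s
      = Real.Gamma a * Real.Gamma (1-g) := by
    have : ∫ s in Set.Ioi (0:ℝ), ∫ t in Set.Ioi (0:ℝ), F t s
        = ∫ s in Set.Ioi (0:ℝ), Real.Gamma a * (Real.exp (-s) * s ^ ((1-g)-1)) :=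
      setIntegral_congr_fun measurableSet_Ioi (fun s hs => inner_t s hs)
    rw [this, MeasureTheory.integral_const_mul, ← Real.Gamma_eq_integral (by linarith : 0 < 1-g)]
  have key : Real.Gamma (a+1-g) * ∫ t in Set.Ioi (0:ℝ), t ^ (a-1) * (1+t) ^ (g-a-1)
      = Real.Gamma a * Real.Gamma (1-g) := by
    rw [← lhs_eq, swap, rhs_eq]
  have hΓ : Real.Gamma (a+1-g) ≠ 0 := (Real.Gamma_pos_of_pos hc).ne'
  field_simp
  linarith [key]

lemma integral_Ioi_scale {G : ℝ → ℝ} {x : ℝ} (hx : 0 < x) :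
    ∫ s in Set.Ioi (0:ℝ), G s = x * ∫ t in Set.Ioi (0:ℝ), G (x*t) := by
  have h := MeasureTheory.integral_comp_mul_left_Ioi G 0 hx
  rw [mul_zero] at h
  rw [h, smul_eq_mul, ← mul_assoc, mul_inv_cancel₀ hx.ne', one_mul]

/-- scaled beta integral -/
lemma scaled_beta {a g u : ℝ} (hu : 0 < u) :
    ∫ s in Set.Ioi (0:ℝ), s ^ (a-1) * (s+u) ^ (g-a-1)
      = u ^ (g-1) * ∫ t in Set.Ioi (0:ℝ), t ^ (a-1) * (1+t) ^ (g-a-1) := by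
  rw [integral_Ioi_scale hu]
  have : ∀ t ∈ Set.Ioi (0:ℝ), (u*t) ^ (a-1) * (u*t+u) ^ (g-a-1)
      = (u ^ (a-1) * u ^ (g-a-1)) * (t ^ (a-1) * (1+t) ^ (g-a-1)) := by
    intro t ht
    have ht0 : (0:ℝ) < t := ht
    rw [show u*t+u = u*(1+t) from by ring, Real.mul_rpow hu.le ht0.le,
      Real.mul_rpow hu.le (by linarith)]
    ring
  rw [setIntegral_congr_fun measurableSet_Ioi this, MeasureTheory.integral_const_mul, ← mul_assoc]
  congr 1
  calc u * (u ^ (a-1) * u ^ (g-a-1)) = u ^ (1:ℝ) * u ^ (a-1+(g-a-1)) := by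
        rw [Real.rpow_add hu, Real.rpow_one]
  _ = u ^ (1+(a-1+(g-a-1))) := (Real.rpow_add hu _ _).symm
  _ = u ^ (g-1) := by ring_nf

/-- substitution for the main integral -/
lemma J_sub {a g x : ℝ} (hx : 0 < x) :
    ∫ s in Set.Ioi (0:ℝ), Real.exp (-s) * s ^ (a-1) * (s+x) ^ (g-a)
      = x ^ g * ∫ t in Set.Ioi (0:ℝ), Real.exp (-t*x) * t ^ (a-1) * (1+t) ^ (g-a) := by
  rw [integral_Ioi_scale hx (G := fun s => Real.exp (-s) * s ^ (a-1) * (s+x) ^ (g-a))]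
  have : ∀ t ∈ Set.Ioi (0:ℝ), Real.exp (-(x*t)) * (x*t) ^ (a-1) * (x*t+x) ^ (g-a)
      = (x ^ (a-1) * x ^ (g-a)) * (Real.exp (-t*x) * t ^ (a-1) * (1+t) ^ (g-a)) := by
    intro t ht
    have ht0 : (0:ℝ) < t := ht
    rw [show x*t+x = x*(1+t) from by ring, Real.mul_rpow hx.le ht0.le,
      Real.mul_rpow hx.le (by linarith), show -(x*t) = -t*x from by ring]
    ring
  rw [setIntegral_congr_fun measurableSet_Ioi this, MeasureTheory.integral_const_mul, ← mul_assoc]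
  congr 1
  calc x * (x ^ (a-1) * x ^ (g-a)) = x ^ (1:ℝ) * x ^ (a-1+(g-a)) := by
        rw [Real.rpow_add hx, Real.rpow_one]
  _ = x ^ (1+(a-1+(g-a))) := (Real.rpow_add hx _ _).symm
  _ = x ^ g := by ring_nf

section
variable {a g u : ℝ}

lemma exp_sub_one_abs_le {s : ℝ} (hs : 0 ≤ s) : |Real.exp (-s) - 1| ≤ min 1 s := by
  have h1 : Real.exp (-s) ≤ 1 := Real.exp_le_one_iff.mpr (by linarith)
  have h2 : -s + 1 ≤ Real.exp (-s) := by linarith [Real.add_one_le_exp (-s)]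
  have h3 : 0 ≤ Real.exp (-s) := (Real.exp_pos _).le
  rw [abs_of_nonpos (by linarith)]
  exact le_min (by linarith) (by linarith)

/-- pointwise bound for the remainder integrand -/
lemma R_ptwise (ha : 0 < a) (hg0 : 0 < g) (hg1 : g < 1) (hu : 0 < u) :
    (∀ s ∈ Set.Ioc (0:ℝ) 1,
      |(Real.exp (-s) - 1) * (s ^ (a-1) * (s+u) ^ (g-a-1))| ≤ 1 * s ^ (g-1)) ∧
    (∀ s ∈ Set.Ioi (1:ℝ),
      |(Real.exp (-s) - 1) * (s ^ (a-1) * (s+u) ^ (g-a-1))| ≤ 1 * s ^ (g-2)) := by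
  have key : ∀ s : ℝ, 0 < s → s ^ (a-1) * (s+u) ^ (g-a-1) ≤ s ^ (g-a-1+(a-1)) := by
    intro s hs0
    calc s ^ (a-1) * (s+u) ^ (g-a-1) ≤ s ^ (a-1) * s ^ (g-a-1) :=
          mul_le_mul_of_nonneg_left
            (Real.rpow_le_rpow_of_nonpos hs0 (by linarith) (by linarith))
            (Real.rpow_nonneg hs0.le _)
    _ = s ^ (g-a-1+(a-1)) := by rw [← Real.rpow_add hs0]; ring_nf
  constructor
  · rintro s ⟨hs0, hs1⟩
    have hnn : 0 ≤ s ^ (a-1) * (s+u) ^ (g-a-1) :=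
      mul_nonneg (Real.rpow_nonneg hs0.le _) (Real.rpow_nonneg (by linarith) _)
    rw [abs_mul, abs_of_nonneg hnn, one_mul]
    calc |Real.exp (-s) - 1| * (s ^ (a-1) * (s+u) ^ (g-a-1))
        ≤ s * s ^ (g-a-1+(a-1)) := by
          apply mul_le_mul ((exp_sub_one_abs_le hs0.le).trans (min_le_right _ _)) (key s hs0)
            hnn hs0.le
    _ = s ^ (g-1) := by
          rw [show s * s ^ (g-a-1+(a-1)) = s ^ (1:ℝ) * s ^ (g-a-1+(a-1)) from by
            rw [Real.rpow_one], ← Real.rpow_add hs0]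
          ring_nf
  · intro s hs
    have hs0 : (0:ℝ) < s := lt_trans one_pos hs
    have hnn : 0 ≤ s ^ (a-1) * (s+u) ^ (g-a-1) :=
      mul_nonneg (Real.rpow_nonneg hs0.le _) (Real.rpow_nonneg (by linarith) _)
    rw [abs_mul, abs_of_nonneg hnn, one_mul]
    calc |Real.exp (-s) - 1| * (s ^ (a-1) * (s+u) ^ (g-a-1))
        ≤ 1 * s ^ (g-a-1+(a-1)) := by
          apply mul_le_mul ((exp_sub_one_abs_le hs0.le).trans (min_le_left _ _)) (key s hs0)
            hnn zero_le_one
    _ = s ^ (g-2) := by rw [one_mul]; ring_nf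
lemma R_integrable (ha : 0 < a) (hg0 : 0 < g) (hg1 : g < 1) (hu : 0 < u) :
    MeasureTheory.IntegrableOn
      (fun s : ℝ => (Real.exp (-s) - 1) * (s ^ (a-1) * (s+u) ^ (g-a-1))) (Set.Ioi 0) :=
  integrableOn_Ioi_of_rpow_bounds (by fun_prop) (by linarith : (-1:ℝ) < g-1)
    (by linarith : g-2 < -1) (R_ptwise ha hg0 hg1 hu).1 (R_ptwise ha hg0 hg1 hu).2

lemma R_bound (ha : 0 < a) (hg0 : 0 < g) (hg1 : g < 1) (hu : 0 < u) :
    |∫ s in Set.Ioi (0:ℝ), (Real.exp (-s) - 1) * (s ^ (a-1) * (s+u) ^ (g-a-1))|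
      ≤ 1/g + 1/(1-g) := by
  have hint := R_integrable ha hg0 hg1 hu
  have hsplit : Set.Ioi (0:ℝ) = Set.Ioc 0 1 ∪ Set.Ioi 1 :=
    (Set.Ioc_union_Ioi_eq_Ioi zero_le_one).symm
  have hdisj : Disjoint (Set.Ioc (0:ℝ) 1) (Set.Ioi 1) := Set.Ioc_disjoint_Ioi le_rfl
  have h1 : MeasureTheory.IntegrableOn
      (fun s : ℝ => (Real.exp (-s) - 1) * (s ^ (a-1) * (s+u) ^ (g-a-1))) (Set.Ioc 0 1) :=
    hint.mono_set (by rw [hsplit]; exact Set.subset_union_left)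
  have h2 : MeasureTheory.IntegrableOn
      (fun s : ℝ => (Real.exp (-s) - 1) * (s ^ (a-1) * (s+u) ^ (g-a-1))) (Set.Ioi 1) :=
    hint.mono_set (by rw [hsplit]; exact Set.subset_union_right)
  rw [hsplit, MeasureTheory.setIntegral_union hdisj measurableSet_Ioi h1 h2]
  have hI1 : IntegrableOn (fun s : ℝ => s ^ (g-1)) (Set.Ioc (0:ℝ) 1) :=
    (intervalIntegrable_iff_integrableOn_Ioc_of_le zero_le_one).mp
      (intervalIntegral.intervalIntegrable_rpow' (by linarith))
  have hI2 : IntegrableOn (fun s : ℝ => s ^ (g-2)) (Set.Ioi (1:ℝ)) :=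
    integrableOn_Ioi_rpow_of_lt (by linarith) one_pos
  have e1 : |∫ s in Set.Ioc (0:ℝ) 1, (Real.exp (-s) - 1) * (s ^ (a-1) * (s+u) ^ (g-a-1))|
      ≤ ∫ s in Set.Ioc (0:ℝ) 1, s ^ (g-1) := by
    rw [← Real.norm_eq_abs]
    refine MeasureTheory.norm_integral_le_of_norm_le hI1 ?_
    filter_upwards [ae_restrict_mem measurableSet_Ioc] with s hs
    rw [Real.norm_eq_abs]
    linarith [(R_ptwise ha hg0 hg1 hu).1 s hs]
  have e2 : |∫ s in Set.Ioi (1:ℝ), (Real.exp (-s) - 1) * (s ^ (a-1) * (s+u) ^ (g-a-1))|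
      ≤ ∫ s in Set.Ioi (1:ℝ), s ^ (g-2) := by
    rw [← Real.norm_eq_abs]
    refine MeasureTheory.norm_integral_le_of_norm_le hI2 ?_
    filter_upwards [ae_restrict_mem measurableSet_Ioi] with s hs
    rw [Real.norm_eq_abs]
    linarith [(R_ptwise ha hg0 hg1 hu).2 s hs]
  have v1 : ∫ s in Set.Ioc (0:ℝ) 1, s ^ (g-1) = 1/g := by
    rw [← intervalIntegral.integral_of_le zero_le_one,
      integral_rpow (Or.inl (by linarith : (-1:ℝ) < g-1))]
    rw [show g-1+1 = g from by ring, Real.one_rpow, Real.zero_rpow hg0.ne']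
    ring
  have v2 : ∫ s in Set.Ioi (1:ℝ), s ^ (g-2) = 1/(1-g) := by
    rw [integral_Ioi_rpow_of_lt (by linarith) one_pos, Real.one_rpow]
    rw [show g-2+1 = g-1 from by ring]
    rw [div_eq_div_iff (by linarith) (by linarith)]
    ring
  calc |_ + _| ≤ _ := abs_add_le _ _
  _ ≤ 1/g + 1/(1-g) := by rw [← v1, ← v2]; exact add_le_add e1 e2
end

section
variable {a g x u : ℝ}

lemma J_integrand_integrable (ha : 0 < a) (hga : g < a) (hg0 : 0 < g) (hx : 0 ≤ x) :
    MeasureTheory.IntegrableOn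
      (fun s : ℝ => Real.exp (-s) * s ^ (a-1) * (s+x) ^ (g-a)) (Set.Ioi 0) := by
  have hm : Measurable (fun s : ℝ => Real.exp (-s) * s ^ (a-1) * (s+x) ^ (g-a)) := by fun_prop
  refine (Real.GammaIntegral_convergent hg0).mono' hm.aestronglyMeasurable ?_
  filter_upwards [ae_restrict_mem measurableSet_Ioi] with s hs
  have hs0 : (0:ℝ) < s := hs
  have hnn : (0:ℝ) ≤ Real.exp (-s) * s ^ (a-1) * (s+x) ^ (g-a) :=
    mul_nonneg (mul_nonneg (Real.exp_pos _).le (Real.rpow_nonneg hs0.le _))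
      (Real.rpow_nonneg (by linarith) _)
  rw [Real.norm_eq_abs, abs_of_nonneg hnn]
  calc Real.exp (-s) * s ^ (a-1) * (s+x) ^ (g-a)
      ≤ Real.exp (-s) * s ^ (a-1) * s ^ (g-a) := by
        apply mul_le_mul_of_nonneg_left
          (Real.rpow_le_rpow_of_nonpos hs0 (by linarith) (by linarith))
          (mul_nonneg (Real.exp_pos _).le (Real.rpow_nonneg hs0.le _))
  _ = Real.exp (-s) * s ^ (g-1) := by
        rw [mul_assoc, ← Real.rpow_add hs0, show a-1+(g-a) = g-1 from by ring]

lemma ftc_rpow {s : ℝ} (hs : 0 < s) (hx : 0 ≤ x) :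
    (s+x) ^ (g-a) - s ^ (g-a) = (g-a) * ∫ u in (0:ℝ)..x, (s+u) ^ (g-a-1) := by
  have hd : ∀ u ∈ Set.uIcc (0:ℝ) x, HasDerivAt (fun v : ℝ => (s+v) ^ (g-a))
      ((g-a) * (s+u) ^ (g-a-1)) u := by
    intro u hu
    rw [Set.uIcc_of_le hx] at hu
    have hpos : (0:ℝ) < s+u := by linarith [hu.1]
    have h1 : HasDerivAt (fun v : ℝ => s+v) 1 u := (hasDerivAt_id u).const_add s
    have h2 := (Real.hasDerivAt_rpow_const (p := g-a) (Or.inl hpos.ne')).comp u h1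
    rw [mul_one] at h2; exact h2
  have hcont : ContinuousOn (fun u : ℝ => (g-a) * (s+u) ^ (g-a-1)) (Set.uIcc 0 x) := by
    apply continuousOn_const.mul
    apply ContinuousOn.rpow_const (continuousOn_const.add continuousOn_id)
    intro u hu
    rw [Set.uIcc_of_le hx] at hu
    exact Or.inl (ne_of_gt (show 0 < s + u by linarith [hu.1]))
  have := intervalIntegral.integral_eq_sub_of_hasDerivAt hd hcont.intervalIntegrable
  rw [intervalIntegral.integral_const_mul] at this
  rw [this, add_zero]

lemma H_decomp (ha : 0 < a) (hg0 : 0 < g) (hg1 : g < 1) (hu : 0 < u) :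
    ∫ s in Set.Ioi (0:ℝ), Real.exp (-s) * (s ^ (a-1) * (s+u) ^ (g-a-1))
      = u ^ (g-1) * (∫ t in Set.Ioi (0:ℝ), t ^ (a-1) * (1+t) ^ (g-a-1))
        + ∫ s in Set.Ioi (0:ℝ), (Real.exp (-s) - 1) * (s ^ (a-1) * (s+u) ^ (g-a-1)) := by
  have key : ∀ s : ℝ, Real.exp (-s) * (s ^ (a-1) * (s+u) ^ (g-a-1))
      = s ^ (a-1) * (s+u) ^ (g-a-1) + (Real.exp (-s) - 1) * (s ^ (a-1) * (s+u) ^ (g-a-1)) := by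
    intro s; ring
  rw [show (fun s : ℝ => Real.exp (-s) * (s ^ (a-1) * (s+u) ^ (g-a-1)))
    = fun s : ℝ => s ^ (a-1) * (s+u) ^ (g-a-1)
        + (Real.exp (-s) - 1) * (s ^ (a-1) * (s+u) ^ (g-a-1)) from funext key]
  rw [MeasureTheory.integral_add (shifted_beta_integrable ha hg1 hu) (R_integrable ha hg0 hg1 hu),
    scaled_beta hu]
end

section
variable {a g x : ℝ}

lemma J_eq (ha : 0 < a) (hg0 : 0 < g) (hg1 : g < 1) (hga : g < a) (hx : 0 < x) :
    ∫ s in Set.Ioi (0:ℝ), Real.exp (-s) * s ^ (a-1) * (s+x) ^ (g-a)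
      = Real.Gamma g
        + (g-a) * ((∫ t in Set.Ioi (0:ℝ), t ^ (a-1) * (1+t) ^ (g-a-1)) * (x ^ g / g)
          + ∫ u in Set.Ioc (0:ℝ) x,
              ∫ s in Set.Ioi (0:ℝ), (Real.exp (-s) - 1) * (s ^ (a-1) * (s+u) ^ (g-a-1))) := by
  set G : ℝ → ℝ → ℝ := fun s u => Real.exp (-s) * (s ^ (a-1) * (s+u) ^ (g-a-1)) with hG
  have hJx := J_integrand_integrable ha hga hg0 hx.le
  have hJ0 : MeasureTheory.IntegrableOn (fun s : ℝ => Real.exp (-s) * s ^ (g-1)) (Set.Ioi 0) :=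
    Real.GammaIntegral_convergent hg0
  have hpt : ∀ s ∈ Set.Ioi (0:ℝ),
      Real.exp (-s) * s ^ (a-1) * (s+x) ^ (g-a) - Real.exp (-s) * s ^ (g-1)
        = (g-a) * ∫ u in Set.Ioc (0:ℝ) x, G s u := by
    intro s hs
    have hs0 : (0:ℝ) < s := hs
    have hsplit : Real.exp (-s) * s ^ (g-1) = Real.exp (-s) * s ^ (a-1) * s ^ (g-a) := by
      rw [mul_assoc, ← Real.rpow_add hs0, show a-1+(g-a) = g-1 from by ring]
    have hinner : ∫ u in Set.Ioc (0:ℝ) x, G s u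
        = (Real.exp (-s) * s ^ (a-1)) * ∫ u in Set.Ioc (0:ℝ) x, (s+u) ^ (g-a-1) := by
      rw [← MeasureTheory.integral_const_mul]
      exact setIntegral_congr_fun measurableSet_Ioc (fun u hu => by rw [hG]; ring)
    rw [hsplit, ← mul_sub, ftc_rpow hs0 hx.le, intervalIntegral.integral_of_le hx.le, hinner]
    ring
  have step1 : ∫ s in Set.Ioi (0:ℝ), Real.exp (-s) * s ^ (a-1) * (s+x) ^ (g-a)
      = Real.Gamma g + (g-a) * ∫ s in Set.Ioi (0:ℝ), ∫ u in Set.Ioc (0:ℝ) x, G s u := by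
    have hsub : ∫ s in Set.Ioi (0:ℝ),
        (Real.exp (-s) * s ^ (a-1) * (s+x) ^ (g-a) - Real.exp (-s) * s ^ (g-1))
        = ∫ s in Set.Ioi (0:ℝ), (g-a) * ∫ u in Set.Ioc (0:ℝ) x, G s u :=
      setIntegral_congr_fun measurableSet_Ioi hpt
    rw [MeasureTheory.integral_sub hJx hJ0, MeasureTheory.integral_const_mul] at hsub
    have hΓ : ∫ s in Set.Ioi (0:ℝ), Real.exp (-s) * s ^ (g-1) = Real.Gamma g :=
      (Real.Gamma_eq_integral hg0).symm
    rw [hΓ] at hsub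
    linarith [hsub]
  have hmG : Measurable (Function.uncurry G) := by
    have : Function.uncurry G
        = fun p : ℝ × ℝ => Real.exp (-p.1) * (p.1 ^ (a-1) * (p.1+p.2) ^ (g-a-1)) := rfl
    rw [this]; fun_prop
  have hint : MeasureTheory.Integrable (Function.uncurry G)
      ((volume.restrict (Set.Ioi 0)).prod (volume.restrict (Set.Ioc 0 x))) := by
    rw [MeasureTheory.integrable_prod_iff hmG.aestronglyMeasurable]
    constructor
    · filter_upwards [ae_restrict_mem measurableSet_Ioi] with s hs
      have hs0 : (0:ℝ) < s := hs
      have hc : ContinuousOn (fun u : ℝ => G s u) (Set.Icc 0 x) := by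
        rw [hG]
        apply continuousOn_const.mul
        apply continuousOn_const.mul
        apply ContinuousOn.rpow_const (continuousOn_const.add continuousOn_id)
        intro u hu
        exact Or.inl (ne_of_gt (show 0 < s + u by linarith [hu.1]))
      exact hc.integrableOn_Icc.mono_set Set.Ioc_subset_Icc_self
    · have heq : (fun s => ∫ u in Set.Ioc (0:ℝ) x, ‖G s u‖)
          =ᵐ[volume.restrict (Set.Ioi 0)]
          (fun s => (a-g)⁻¹ * (Real.exp (-s) * s ^ (g-1)
            - Real.exp (-s) * s ^ (a-1) * (s+x) ^ (g-a))) := by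
        filter_upwards [ae_restrict_mem measurableSet_Ioi] with s hs
        have hs0 : (0:ℝ) < s := hs
        have h1 : ∫ u in Set.Ioc (0:ℝ) x, ‖G s u‖ = ∫ u in Set.Ioc (0:ℝ) x, G s u := by
          refine setIntegral_congr_fun measurableSet_Ioc (fun u hu => ?_)
          have hnn : 0 ≤ G s u := by
            rw [hG]
            exact mul_nonneg (Real.exp_pos _).le (mul_nonneg (Real.rpow_nonneg hs0.le _)
              (Real.rpow_nonneg (by linarith [hu.1]) _))
          rw [Real.norm_eq_abs, abs_of_nonneg hnn]
        have h2 : ∫ u in Set.Ioc (0:ℝ) x, G s u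
            = (Real.exp (-s) * s ^ (a-1)) * ∫ u in Set.Ioc (0:ℝ) x, (s+u) ^ (g-a-1) := by
          rw [← MeasureTheory.integral_const_mul]
          exact setIntegral_congr_fun measurableSet_Ioc (fun u hu => by rw [hG]; ring)
        have h3 : (g-a) * ∫ u in Set.Ioc (0:ℝ) x, (s+u) ^ (g-a-1)
            = (s+x) ^ (g-a) - s ^ (g-a) := by
          rw [← intervalIntegral.integral_of_le hx.le]
          exact (ftc_rpow hs0 hx.le).symm
        have hsplit : Real.exp (-s) * s ^ (g-1) = Real.exp (-s) * s ^ (a-1) * s ^ (g-a) := by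
          rw [mul_assoc, ← Real.rpow_add hs0, show a-1+(g-a) = g-1 from by ring]
        rw [h1, h2, hsplit]
        have hag : a - g ≠ 0 := by linarith
        rw [inv_mul_eq_div, eq_div_iff hag]
        linear_combination (-(Real.exp (-s) * s ^ (a-1))) * h3
      refine MeasureTheory.Integrable.congr ?_ heq.symm
      exact (hJ0.sub hJx).const_mul _
  have swap := MeasureTheory.integral_integral_swap hint
  have hC : MeasureTheory.IntegrableOn
      (fun u : ℝ => u ^ (g-1) * ∫ t in Set.Ioi (0:ℝ), t ^ (a-1) * (1+t) ^ (g-a-1))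
      (Set.Ioc 0 x) :=
    ((intervalIntegrable_iff_integrableOn_Ioc_of_le hx.le).mp
      (intervalIntegral.intervalIntegrable_rpow' (by linarith))).mul_const _
  have hHu : MeasureTheory.IntegrableOn
      (fun u => ∫ s in Set.Ioi (0:ℝ), G s u) (Set.Ioc 0 x) := hint.integral_prod_right
  have hRu : MeasureTheory.IntegrableOn
      (fun u => ∫ s in Set.Ioi (0:ℝ), (Real.exp (-s) - 1) * (s ^ (a-1) * (s+u) ^ (g-a-1)))
      (Set.Ioc 0 x) := by
    refine MeasureTheory.IntegrableOn.congr_fun (hHu.sub hC) (fun u hu => ?_) measurableSet_Ioc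
    have hd := H_decomp ha hg0 hg1 hu.1
    simp only [hG, Pi.sub_apply] at hd ⊢
    linarith [hd]
  have hval : ∫ u in Set.Ioc (0:ℝ) x, u ^ (g-1) = x ^ g / g := by
    rw [← intervalIntegral.integral_of_le hx.le,
      integral_rpow (Or.inl (by linarith : (-1:ℝ) < g-1)),
      show g-1+1 = g from by ring, Real.zero_rpow hg0.ne']
    ring
  have hsum : ∫ u in Set.Ioc (0:ℝ) x, ∫ s in Set.Ioi (0:ℝ), G s u
      = (∫ t in Set.Ioi (0:ℝ), t ^ (a-1) * (1+t) ^ (g-a-1)) * (x ^ g / g)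
        + ∫ u in Set.Ioc (0:ℝ) x,
            ∫ s in Set.Ioi (0:ℝ), (Real.exp (-s) - 1) * (s ^ (a-1) * (s+u) ^ (g-a-1)) := by
    have h1 : ∫ u in Set.Ioc (0:ℝ) x, ∫ s in Set.Ioi (0:ℝ), G s u
        = ∫ u in Set.Ioc (0:ℝ) x,
            (u ^ (g-1) * (∫ t in Set.Ioi (0:ℝ), t ^ (a-1) * (1+t) ^ (g-a-1))
              + ∫ s in Set.Ioi (0:ℝ), (Real.exp (-s) - 1) * (s ^ (a-1) * (s+u) ^ (g-a-1))) :=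
      setIntegral_congr_fun measurableSet_Ioc (fun u hu => H_decomp ha hg0 hg1 hu.1)
    rw [h1, MeasureTheory.integral_add hC hRu]
    congr 1
    rw [MeasureTheory.integral_mul_const, hval, mul_comm]
  rw [step1, swap, hsum]
end

set_option maxHeartbeats 1000000 in
theorem extension_boundary_expansion (γ lam k : ℝ) (hγ : 0 < γ) (hγ' : γ < 1)
    (hlam : lam ≠ 0) (hk : 0 < k) :
    let φ : ℝ → ℝ := fun q =>
      Real.exp (-|lam| * q) * (2 * |lam| * q) ^ γ *
        (Real.Gamma ((1 + γ + k) / 2) / Real.Gamma γ) *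
        kummerV ((1 + γ + k) / 2) (1 + γ) (2 * |lam| * q)
    (fun q : ℝ => φ q -
        (1 - (Real.Gamma (1 - γ) / Real.Gamma (1 + γ)) *
          (Real.Gamma ((1 + γ + k) / 2) / Real.Gamma ((1 - γ + k) / 2)) *
          (2 * |lam| * q) ^ γ))
      =O[nhdsWithin 0 (Set.Ioi 0)] (fun q : ℝ => q) := by
  intro φ
  have hφdef : φ = fun q =>
      Real.exp (-|lam| * q) * (2 * |lam| * q) ^ γ *
        (Real.Gamma ((1 + γ + k) / 2) / Real.Gamma γ) *
        kummerV ((1 + γ + k) / 2) (1 + γ) (2 * |lam| * q) := rfl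
  have hL : 0 < |lam| := abs_pos.mpr hlam
  set L := |lam| with hLdef
  set a := (1 + γ + k) / 2 with ha_def
  have ha : 0 < a := by rw [ha_def]; linarith
  have hga : γ < a := by rw [ha_def]; linarith
  have haγ : (1 - γ + k) / 2 = a - γ := by rw [ha_def]; ring
  rw [haγ]
  have hΓγ : 0 < Real.Gamma γ := Real.Gamma_pos_of_pos hγ
  have hΓa : 0 < Real.Gamma a := Real.Gamma_pos_of_pos ha
  have hΓag : 0 < Real.Gamma (a - γ) := Real.Gamma_pos_of_pos (by linarith)
  have hΓ1γ : 0 < Real.Gamma (1 - γ) := Real.Gamma_pos_of_pos (by linarith)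
  -- φ in terms of the shifted integral, for any q with 0 < 2Lq
  have hφq : ∀ q : ℝ, 0 < q → φ q = Real.exp (-L * q)
      * ((∫ s in Set.Ioi (0:ℝ), Real.exp (-s) * s ^ (a-1) * (s+(2*L*q)) ^ (γ-a))
          / Real.Gamma γ) := by
    intro q hq0
    have hx0 : (0:ℝ) < 2*L*q := by positivity
    rw [hφdef]
    simp only
    rw [kummerV, show (1:ℝ) + γ - (1+γ+k)/2 - 1 = γ - a from by rw [ha_def]; ring,
      J_sub (a := a) (g := γ) hx0]
    field_simp
  have hΓrec1 : Real.Gamma (a+1-γ) = (a-γ) * Real.Gamma (a-γ) := by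
    rw [show a+1-γ = (a-γ)+1 from by ring,
      Real.Gamma_add_one (by linarith : a-γ > 0).ne']
  have hΓrec2 : Real.Gamma (1+γ) = γ * Real.Gamma γ := by
    rw [show 1+γ = γ+1 from by ring, Real.Gamma_add_one hγ.ne']
  have hΓ1γ' : 0 < Real.Gamma (1+γ) := by rw [hΓrec2]; positivity
  set c₀ := Real.Gamma (1 - γ) / Real.Gamma (1 + γ) * (Real.Gamma a / Real.Gamma (a - γ))
    with hc0_def
  set M := 1/γ + 1/(1-γ) with hM_def
  have hM0 : 0 < M := by
    rw [hM_def]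
    have h1 : 0 < 1/γ := by positivity
    have h2 : 0 < 1/(1-γ) := by apply div_pos one_pos; linarith
    linarith
  clear_value L
  rw [Asymptotics.isBigO_iff]
  refine ⟨2*L*((1+|c₀|) + (a-γ)*M/Real.Gamma γ), ?_⟩
  filter_upwards [Ioo_mem_nhdsGT_of_mem
    (show (0:ℝ) ∈ Set.Ico 0 (1/(2*L)) from ⟨le_rfl, by positivity⟩)] with q hq
  obtain ⟨hq0, hq1⟩ := hq
  set x := 2*L*q with hx_def
  have hx0 : 0 < x := by rw [hx_def]; positivity
  have hx1 : x ≤ 1 := by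
    have h := (lt_div_iff₀ (by positivity : (0:ℝ) < 2*L)).mp hq1
    calc x = q * (2*L) := by rw [hx_def]; ring
    _ ≤ 1 := h.le
  have hqx : L*q ≤ x := by rw [hx_def]; nlinarith
  have hφq' := hφq q hq0
  rw [← hx_def] at hφq'
  clear_value x
  -- the J identity with Beta value
  have hJeq := J_eq (a := a) (g := γ) ha hγ hγ' hga hx0
  rw [beta_value ha hγ'] at hJeq
  set E := ∫ u in Set.Ioc (0:ℝ) x,
      ∫ s in Set.Ioi (0:ℝ), (Real.exp (-s) - 1) * (s ^ (a-1) * (s+u) ^ (γ-a-1)) with hE_def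
  have hEbound : |E| ≤ M * x := by
    rw [hE_def, ← Real.norm_eq_abs]
    have hb : ∀ᵐ u ∂(volume.restrict (Set.Ioc (0:ℝ) x)),
        ‖∫ s in Set.Ioi (0:ℝ), (Real.exp (-s) - 1) * (s ^ (a-1) * (s+u) ^ (γ-a-1))‖ ≤ M := by
      filter_upwards [MeasureTheory.ae_restrict_mem measurableSet_Ioc] with u hu
      rw [Real.norm_eq_abs, hM_def]
      exact R_bound ha hγ hγ' hu.1
    calc ‖∫ u in Set.Ioc (0:ℝ) x,
        ∫ s in Set.Ioi (0:ℝ), (Real.exp (-s) - 1) * (s ^ (a-1) * (s+u) ^ (γ-a-1))‖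
        ≤ ∫ _u in Set.Ioc (0:ℝ) x, M :=
          MeasureTheory.norm_integral_le_of_norm_le (MeasureTheory.integrable_const M) hb
    _ = M * x := by
        rw [MeasureTheory.setIntegral_const, smul_eq_mul, Real.volume_real_Ioc_of_le hx0.le,
          sub_zero, mul_comm]
  clear_value E M c₀
  clear_value a
  -- J over Γγ
  have hJΓ : (∫ s in Set.Ioi (0:ℝ), Real.exp (-s) * s ^ (a-1) * (s+x) ^ (γ-a)) / Real.Gamma γ
      = 1 - c₀ * x ^ γ + (γ-a) * E / Real.Gamma γ := by
    have hne1 : a - γ ≠ 0 := by linarith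
    rw [hJeq, hc0_def, hΓrec2, hΓrec1]
    field_simp
    ring
  -- pointwise bounds
  have hexp1 : |Real.exp (-L*q) - 1| ≤ L*q := by
    have h := exp_sub_one_abs_le (s := L*q) (by positivity)
    rw [show -(L*q) = -L*q from by ring] at h
    exact h.trans (min_le_right _ _)
  have hexp2 : Real.exp (-L*q) ≤ 1 := Real.exp_le_one_iff.mpr (by nlinarith)
  have hxγ : x ^ γ ≤ 1 := Real.rpow_le_one hx0.le hx1 hγ.le
  have hcx : |1 - c₀ * x ^ γ| ≤ 1 + |c₀| := by
    calc |1 - c₀ * x ^ γ| ≤ |1| + |c₀ * x ^ γ| := abs_sub _ _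
    _ = 1 + |c₀| * x ^ γ := by
        rw [abs_one, abs_mul, abs_of_nonneg (Real.rpow_nonneg hx0.le γ)]
    _ ≤ 1 + |c₀| := by
        have h := mul_le_mul_of_nonneg_left hxγ (abs_nonneg c₀)
        linarith
  have hEb2 : |(γ-a) * E / Real.Gamma γ| ≤ (a-γ) * (M*x) / Real.Gamma γ := by
    rw [abs_div, abs_of_pos hΓγ, div_le_div_iff_of_pos_right hΓγ, abs_mul,
      abs_of_neg (by linarith : γ-a < 0), show -(γ-a) = a-γ from by ring]
    exact mul_le_mul_of_nonneg_left hEbound (by linarith)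
  have hsplit : φ q - (1 - c₀ * x ^ γ)
      = (Real.exp (-L*q) - 1) * (1 - c₀ * x ^ γ)
        + Real.exp (-L*q) * ((γ-a) * E / Real.Gamma γ) := by
    rw [hφq', hJΓ]; ring
  rw [Real.norm_eq_abs, Real.norm_eq_abs, hsplit, abs_of_pos hq0]
  calc |(Real.exp (-L*q) - 1) * (1 - c₀ * x ^ γ)
        + Real.exp (-L*q) * ((γ-a) * E / Real.Gamma γ)|
      ≤ |(Real.exp (-L*q) - 1) * (1 - c₀ * x ^ γ)|
        + |Real.exp (-L*q) * ((γ-a) * E / Real.Gamma γ)| := abs_add_le _ _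
  _ ≤ (L*q) * (1 + |c₀|) + 1 * ((a-γ) * (M*x) / Real.Gamma γ) := by
      rw [abs_mul, abs_mul]
      apply add_le_add
      · exact mul_le_mul hexp1 hcx (abs_nonneg _) (by positivity)
      · refine mul_le_mul ?_ hEb2 (abs_nonneg _) zero_le_one
        rw [abs_of_pos (Real.exp_pos _)]; exact hexp2
  _ ≤ 2*L*((1+|c₀|) + (a-γ)*M/Real.Gamma γ) * q := by
      rw [one_mul, show (a-γ) * (M*x) / Real.Gamma γ = ((a-γ)*M/Real.Gamma γ) * x from by ring,
        hx_def]
      have hK2 : 0 ≤ (a-γ)*M/Real.Gamma γ := div_nonneg (mul_nonneg (by linarith) hM0.le) hΓγ.le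
      nlinarith [mul_nonneg (mul_nonneg hL.le hq0.le) (by positivity : (0:ℝ) ≤ 1+|c₀|)]
end
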